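/- Let R be a G-graded ring which is injective as an object of the category of graded left R-modules. Then the graded singular ideal Z^gr(R) equals the graded Jacobson radical J^gr(R), and R/J^gr(R) is graded von Neumann regular. -/

import Mathlib

open DirectSum

universe u v w

variable {G : Type u} [Group G] [DecidableEq G]
variable {R : Type v} [Ring R]

/-- `𝒜` is a `G`-grading of the ring `R`: homogeneous components are additive
subgroups, `1` is homogeneous of trivial degree, multiplication respects degrees,
and `R` is the internal direct sum of the components. -/
def IsGRing (𝒜 : G → AddSubgroup R) : Prop :=
  (1 : R) ∈ 𝒜 1 ∧
  (∀ (g h : G) (a b : R), a ∈ 𝒜 g → b ∈ 𝒜 h → a * b ∈ 𝒜 (g * h)) ∧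
  DirectSum.IsInternal 𝒜

/-- A left ideal is graded when it is spanned by its homogeneous elements. -/
def IsGradedLeftIdeal (𝒜 : G → AddSubgroup R) (I : Submodule R R) : Prop :=
  I = Submodule.span R ((I : Set R) ∩ ⋃ g, (𝒜 g : Set R))

/-- A minimal graded left ideal (a graded-simple graded left submodule of `R`). -/
def IsMinGradedLeftIdeal (𝒜 : G → AddSubgroup R) (S : Submodule R R) : Prop :=
  IsGradedLeftIdeal 𝒜 S ∧ S ≠ ⊥ ∧
    ∀ T : Submodule R R, T ≤ S → IsGradedLeftIdeal 𝒜 T → T = ⊥ ∨ T = S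

/-- A maximal graded left ideal. -/
def IsMaxGradedLeftIdeal (𝒜 : G → AddSubgroup R) (I : Submodule R R) : Prop :=
  IsGradedLeftIdeal 𝒜 I ∧ I ≠ ⊤ ∧
    ∀ J : Submodule R R, IsGradedLeftIdeal 𝒜 J → I < J → J = ⊤

/-- The graded Jacobson radical: intersection of all maximal graded left ideals. -/
def grJacobson (𝒜 : G → AddSubgroup R) : Submodule R R :=
  sInf {I : Submodule R R | IsMaxGradedLeftIdeal 𝒜 I}

/-- Left annihilator of a subset of `R`. -/
def annLset (X : Set R) : Set R := {r : R | ∀ x ∈ X, r * x = 0}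

/-- Right annihilator of a subset of `R`. -/
def annRset (X : Set R) : Set R := {r : R | ∀ x ∈ X, x * r = 0}

/-- Left annihilator of an element, as a left ideal. -/
def annLIdeal (x : R) : Submodule R R where
  carrier := {r : R | r * x = 0}
  add_mem' := by
    intro a b ha hb
    simp only [Set.mem_setOf_eq] at *
    rw [add_mul, ha, hb, add_zero]
  zero_mem' := by simp
  smul_mem' := by
    intro c a ha
    simp only [Set.mem_setOf_eq, smul_eq_mul] at *
    rw [mul_assoc, ha, mul_zero]

/-- A left ideal is essential if it meets every nonzero left ideal nontrivially. -/
def IsEssentialLeftIdeal (I : Submodule R R) : Prop :=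
  ∀ J : Submodule R R, J ≠ ⊥ → I ⊓ J ≠ ⊥

/-- Homogeneous part of degree `g` of the graded singular ideal. -/
def grSingSet (𝒜 : G → AddSubgroup R) (g : G) : Set R :=
  {x : R | x ∈ 𝒜 g ∧ IsEssentialLeftIdeal (annLIdeal x)}

/-- The graded singular ideal `Z^gr(R) = ⊕_g Z^gr(R)_g`. -/
def grSing (𝒜 : G → AddSubgroup R) : AddSubgroup R :=
  AddSubgroup.closure (⋃ g, grSingSet 𝒜 g)

/-- `R` is graded left self-injective (graded Baer criterion): every morphism of
degree `σ` from a graded left ideal to `R` is right multiplication by an element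
of degree `σ`. -/
def GrLeftSelfInjective (𝒜 : G → AddSubgroup R) : Prop :=
  ∀ I : Submodule R R, IsGradedLeftIdeal 𝒜 I → ∀ σ : G, ∀ f : I →ₗ[R] R,
    (∀ (g : G) (x : I), (x : R) ∈ 𝒜 g → f x ∈ 𝒜 (g * σ)) →
    ∃ m ∈ 𝒜 σ, ∀ x : I, f x = (x : R) * m

/-- Ascending chain condition on graded left ideals. -/
def GrLeftNoetherian (𝒜 : G → AddSubgroup R) : Prop :=
  ∀ f : ℕ → Submodule R R, (∀ n, IsGradedLeftIdeal 𝒜 (f n)) → Monotone f →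
    ∃ n, ∀ m, n ≤ m → f m = f n

/-- Descending chain condition on graded left ideals. -/
def GrLeftArtinian (𝒜 : G → AddSubgroup R) : Prop :=
  ∀ f : ℕ → Submodule R R, (∀ n, IsGradedLeftIdeal 𝒜 (f n)) → Antitone f →
    ∃ n, ∀ m, n ≤ m → f m = f n

/-- Graded von Neumann regularity. -/
def GrVNRegular (𝒜 : G → AddSubgroup R) : Prop :=
  ∀ (g : G) (a : R), a ∈ 𝒜 g → ∃ b : R, a = a * b * a

/-- Graded semisimplicity: `R` is the sum of its minimal graded left ideals. -/
def GrSemisimple (𝒜 : G → AddSubgroup R) : Prop :=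
  sSup {S : Submodule R R | IsMinGradedLeftIdeal 𝒜 S} = (⊤ : Submodule R R)

/-- `ℳ` is a `G`-grading of the left `R`-module `M`, compatible with `𝒜`. -/
def IsGModule (𝒜 : G → AddSubgroup R) {M : Type w} [AddCommGroup M] [Module R M]
    (ℳ : G → AddSubgroup M) : Prop :=
  (∀ (g h : G) (a : R) (m : M), a ∈ 𝒜 g → m ∈ ℳ h → a • m ∈ ℳ (g * h)) ∧
  DirectSum.IsInternal ℳ

/-- A submodule is graded when it is spanned by its homogeneous elements. -/
def IsGradedSubmodule {M : Type w} [AddCommGroup M] [Module R M]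
    (ℳ : G → AddSubgroup M) (N : Submodule R M) : Prop :=
  N = Submodule.span R ((N : Set M) ∩ ⋃ g, (ℳ g : Set M))


section Aux
variable {𝒜 : G → AddSubgroup R}

noncomputable local instance gdec : ∀ (g : G) (x : 𝒜 g), Decidable (x ≠ 0) :=
  fun _ _ => Classical.dec _

noncomputable def gdecomp (h𝒜 : IsGRing 𝒜) : R ≃+ ⨁ g, 𝒜 g :=
  (AddEquiv.ofBijective _ h𝒜.2.2).symm

noncomputable def gpi (h𝒜 : IsGRing 𝒜) (g : G) (x : R) : R :=
  (gdecomp h𝒜 x g : R)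

noncomputable def gsupp (h𝒜 : IsGRing 𝒜) (x : R) : Finset G :=
  (gdecomp h𝒜 x).support

variable (h𝒜 : IsGRing 𝒜)

lemma gpi_mem (g : G) (x : R) : gpi h𝒜 g x ∈ 𝒜 g := (gdecomp h𝒜 x g).2

lemma gpi_add (g : G) (x y : R) :
    gpi h𝒜 g (x + y) = gpi h𝒜 g x + gpi h𝒜 g y := by
  simp [gpi, map_add, DirectSum.add_apply]

noncomputable def gpihom (g : G) : R →+ R :=
  AddMonoidHom.mk' (gpi h𝒜 g) (fun x y => gpi_add h𝒜 g x y)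

lemma gpi_sum {α : Type*} (g : G) (s : Finset α) (f : α → R) :
    gpi h𝒜 g (∑ i ∈ s, f i) = ∑ i ∈ s, gpi h𝒜 g (f i) :=
  map_sum (gpihom h𝒜 g) f s

lemma gpi_zero (g : G) : gpi h𝒜 g (0 : R) = 0 := map_zero (gpihom h𝒜 g)

lemma gdecomp_of_mem {g : G} {x : R} (hx : x ∈ 𝒜 g) :
    gdecomp h𝒜 x = DirectSum.of (fun g => 𝒜 g) g ⟨x, hx⟩ := by
  unfold gdecomp
  rw [AddEquiv.symm_apply_eq]
  exact (DirectSum.coeAddMonoidHom_of 𝒜 g ⟨x, hx⟩).symm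

lemma gpi_of_mem {g : G} {x : R} (hx : x ∈ 𝒜 g) : gpi h𝒜 g x = x := by
  unfold gpi
  rw [gdecomp_of_mem h𝒜 hx, DirectSum.of_eq_same]

lemma gpi_of_mem_ne {g h : G} {x : R} (hx : x ∈ 𝒜 g) (hne : h ≠ g) :
    gpi h𝒜 h x = 0 := by
  unfold gpi
  rw [gdecomp_of_mem h𝒜 hx, DirectSum.of_eq_of_ne _ _ _ hne]
  rfl

lemma gsum_pi (x : R) : ∑ g ∈ gsupp h𝒜 x, gpi h𝒜 g x = x := by
  have h1 : DirectSum.coeAddMonoidHom 𝒜 (gdecomp h𝒜 x) = x := by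
    unfold gdecomp
    exact (AddEquiv.ofBijective _ h𝒜.2.2).apply_symm_apply x
  conv_rhs => rw [← h1]
  rw [← DirectSum.sum_support_of (gdecomp h𝒜 x), map_sum]
  simp only [DirectSum.coeAddMonoidHom_of]
  rfl

lemma gpi_of_not_mem_supp {g : G} {x : R} (hg : g ∉ gsupp h𝒜 x) :
    gpi h𝒜 g x = 0 := by
  unfold gpi
  rw [DFinsupp.notMem_support_iff.mp hg]
  rfl

lemma gexists_pi_ne {x : R} (hx : x ≠ 0) : ∃ g, gpi h𝒜 g x ≠ 0 := by
  by_contra h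
  push_neg at h
  apply hx
  rw [← gsum_pi h𝒜 x]
  exact Finset.sum_eq_zero fun g _ => h g

lemma gpi_one : gpi h𝒜 1 (1 : R) = 1 := gpi_of_mem h𝒜 h𝒜.1

lemma gpi_mul_right {g : G} {b : R} (hb : b ∈ 𝒜 g) (k : G) (a : R) :
    gpi h𝒜 k (a * b) = gpi h𝒜 (k * g⁻¹) a * b := by
  have hab : a * b = ∑ t ∈ gsupp h𝒜 a, gpi h𝒜 t a * b := by
    rw [← Finset.sum_mul, gsum_pi]
  rw [hab, gpi_sum]
  have hterm : ∀ t ∈ gsupp h𝒜 a,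
      gpi h𝒜 k (gpi h𝒜 t a * b) = if t = k * g⁻¹ then gpi h𝒜 t a * b else 0 := by
    intro t _
    have htb : gpi h𝒜 t a * b ∈ 𝒜 (t * g) := h𝒜.2.1 _ _ _ _ (gpi_mem h𝒜 t a) hb
    by_cases ht : t = k * g⁻¹
    · subst ht
      rw [if_pos rfl]
      apply gpi_of_mem h𝒜
      rwa [inv_mul_cancel_right] at htb
    · rw [if_neg ht]
      apply gpi_of_mem_ne h𝒜 htb
      intro hk
      exact ht (eq_mul_inv_iff_mul_eq.mpr hk.symm)
  rw [Finset.sum_congr rfl hterm, Finset.sum_ite_eq' (gsupp h𝒜 a) (k * g⁻¹)]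
  by_cases hmem : k * g⁻¹ ∈ gsupp h𝒜 a
  · rw [if_pos hmem]
  · rw [if_neg hmem, gpi_of_not_mem_supp h𝒜 hmem, zero_mul]

lemma gpi_mul_left {g : G} {a : R} (ha : a ∈ 𝒜 g) (k : G) (b : R) :
    gpi h𝒜 k (a * b) = a * gpi h𝒜 (g⁻¹ * k) b := by
  have hab : a * b = ∑ t ∈ gsupp h𝒜 b, a * gpi h𝒜 t b := by
    rw [← Finset.mul_sum, gsum_pi]
  rw [hab, gpi_sum]
  have hterm : ∀ t ∈ gsupp h𝒜 b,
      gpi h𝒜 k (a * gpi h𝒜 t b) = if t = g⁻¹ * k then a * gpi h𝒜 t b else 0 := by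
    intro t _
    have htb : a * gpi h𝒜 t b ∈ 𝒜 (g * t) := h𝒜.2.1 _ _ _ _ ha (gpi_mem h𝒜 t b)
    by_cases ht : t = g⁻¹ * k
    · subst ht
      rw [if_pos rfl]
      apply gpi_of_mem h𝒜
      rwa [mul_inv_cancel_left] at htb
    · rw [if_neg ht]
      apply gpi_of_mem_ne h𝒜 htb
      intro hk
      exact ht (eq_inv_mul_iff_mul_eq.mpr hk.symm)
  rw [Finset.sum_congr rfl hterm, Finset.sum_ite_eq' (gsupp h𝒜 b) (g⁻¹ * k)]
  by_cases hmem : g⁻¹ * k ∈ gsupp h𝒜 b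
  · rw [if_pos hmem]
  · rw [if_neg hmem, gpi_of_not_mem_supp h𝒜 hmem, mul_zero]


lemma graded_iff_pi (h𝒜 : IsGRing 𝒜) {I : Submodule R R} :
    IsGradedLeftIdeal 𝒜 I ↔ ∀ x ∈ I, ∀ g, gpi h𝒜 g x ∈ I := by
  constructor
  · intro hgr x hx g
    rw [hgr] at hx
    revert g
    induction hx using Submodule.span_induction with
    | mem y hy =>
      obtain ⟨hyI, hyh⟩ := hy
      obtain ⟨S, ⟨g0, rfl⟩, hyg0⟩ := hyh
      intro g
      by_cases hgg : g = g0
      · subst hgg; rw [gpi_of_mem h𝒜 hyg0]; exact hyI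
      · rw [gpi_of_mem_ne h𝒜 hyg0 hgg]; exact I.zero_mem
    | zero => intro g; rw [gpi_zero]; exact I.zero_mem
    | add y z _ _ hy hz =>
      intro g; rw [gpi_add]; exact I.add_mem (hy g) (hz g)
    | smul r y _ hy =>
      intro g
      have : r • y = ∑ t ∈ gsupp h𝒜 y, r * gpi h𝒜 t y := by
        rw [← Finset.mul_sum, gsum_pi]; rfl
      rw [this, gpi_sum]
      refine Submodule.sum_mem I fun t _ => ?_
      rw [gpi_mul_right h𝒜 (gpi_mem h𝒜 t y)]
      exact I.smul_mem _ (hy t)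
  · intro h
    apply le_antisymm
    · intro x hx
      rw [← gsum_pi h𝒜 x]
      refine Submodule.sum_mem _ fun g _ => Submodule.subset_span ?_
      exact ⟨h x hx g, Set.mem_iUnion.mpr ⟨g, gpi_mem h𝒜 g x⟩⟩
    · rw [Submodule.span_le]
      exact Set.inter_subset_left

lemma graded_bot (h𝒜 : IsGRing 𝒜) : IsGradedLeftIdeal 𝒜 (⊥ : Submodule R R) := by
  rw [graded_iff_pi h𝒜]
  intro x hx g
  rw [Submodule.mem_bot] at hx
  subst hx
  rw [gpi_zero]
  exact Submodule.zero_mem _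

lemma graded_top (h𝒜 : IsGRing 𝒜) : IsGradedLeftIdeal 𝒜 (⊤ : Submodule R R) := by
  rw [graded_iff_pi h𝒜]; intro x _ g; trivial

lemma graded_sup (h𝒜 : IsGRing 𝒜) {I J : Submodule R R}
    (hI : IsGradedLeftIdeal 𝒜 I) (hJ : IsGradedLeftIdeal 𝒜 J) :
    IsGradedLeftIdeal 𝒜 (I ⊔ J) := by
  rw [graded_iff_pi h𝒜] at *
  intro x hx g
  obtain ⟨a, ha, b, hb, rfl⟩ := Submodule.mem_sup.mp hx
  rw [gpi_add]
  exact Submodule.add_mem _ (Submodule.mem_sup_left (hI a ha g))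
    (Submodule.mem_sup_right (hJ b hb g))

lemma graded_span_singleton (h𝒜 : IsGRing 𝒜) {g : G} {z : R} (hz : z ∈ 𝒜 g) :
    IsGradedLeftIdeal 𝒜 (Submodule.span R {z}) := by
  rw [graded_iff_pi h𝒜]
  intro x hx k
  obtain ⟨a, rfl⟩ := Submodule.mem_span_singleton.mp hx
  show gpi h𝒜 k (a * z) ∈ _
  rw [gpi_mul_right h𝒜 hz]
  exact Submodule.mem_span_singleton.mpr ⟨gpi h𝒜 (k * g⁻¹) a, rfl⟩

lemma mem_annLIdeal {x r : R} : r ∈ annLIdeal x ↔ r * x = 0 := Iff.rfl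

lemma graded_annL (h𝒜 : IsGRing 𝒜) {g : G} {x : R} (hx : x ∈ 𝒜 g) :
    IsGradedLeftIdeal 𝒜 (annLIdeal x) := by
  rw [graded_iff_pi h𝒜]
  intro a ha k
  rw [mem_annLIdeal] at ha ⊢
  have : gpi h𝒜 (k * g) (a * x) = gpi h𝒜 k a * x := by
    rw [gpi_mul_right h𝒜 hx, mul_inv_cancel_right]
  rw [← this, ha, gpi_zero]

lemma grJacobson_pi (h𝒜 : IsGRing 𝒜) {x : R} (hx : x ∈ grJacobson 𝒜) (g : G) :
    gpi h𝒜 g x ∈ grJacobson 𝒜 := by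
  rw [grJacobson, Submodule.mem_sInf] at hx ⊢
  intro M hM
  exact (graded_iff_pi h𝒜).mp hM.1 x (hx M hM) g

/-- Zorn: every proper graded left ideal is contained in a maximal graded left ideal. -/
lemma exists_max_graded (h𝒜 : IsGRing 𝒜) {I : Submodule R R}
    (hI : IsGradedLeftIdeal 𝒜 I) (hItop : I ≠ ⊤) :
    ∃ M, IsMaxGradedLeftIdeal 𝒜 M ∧ I ≤ M := by
  obtain ⟨M, hIM, hMmem, hMmax⟩ :=
    zorn_le_nonempty₀ {J : Submodule R R | IsGradedLeftIdeal 𝒜 J ∧ J ≠ ⊤}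
      (fun c hc hchain y hy => by
        refine ⟨sSup c, ⟨?_, ?_⟩, fun z hz => le_sSup hz⟩
        · rw [graded_iff_pi h𝒜]
          intro x hx g
          obtain ⟨J, hJc, hxJ⟩ := (Submodule.mem_sSup_of_directed ⟨y, hy⟩
            hchain.directedOn).mp hx
          exact le_sSup hJc ((graded_iff_pi h𝒜).mp (hc hJc).1 x hxJ g)
        · intro htop
          have h1 : (1 : R) ∈ sSup c := htop ▸ Submodule.mem_top
          obtain ⟨J, hJc, hxJ⟩ := (Submodule.mem_sSup_of_directed ⟨y, hy⟩
            hchain.directedOn).mp h1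
          exact (hc hJc).2 (Submodule.eq_top_iff'.mpr fun r => by
            simpa using J.smul_mem r hxJ))
      I ⟨hI, hItop⟩
  refine ⟨M, ⟨hMmem.1, hMmem.2, fun J hJ hMJ => ?_⟩, hIM⟩
  by_contra hJtop
  exact absurd (hMmax ⟨hJ, hJtop⟩ hMJ.le) (not_le_of_gt hMJ)


lemma ess_mono {E F : Submodule R R} (hEF : E ≤ F) (hE : IsEssentialLeftIdeal E) :
    IsEssentialLeftIdeal F := by
  intro J hJ hFJ
  apply hE J hJ
  rw [eq_bot_iff] at hFJ ⊢
  exact le_trans (inf_le_inf_right J hEF) hFJ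

/-- The preimage `{a | a * r ∈ E}` of an essential left ideal is essential. -/
lemma ess_comap {E : Submodule R R} (hE : IsEssentialLeftIdeal E) (r : R) :
    IsEssentialLeftIdeal (E.comap (LinearMap.toSpanSingleton R R r)) := by
  intro J hJ
  rw [Submodule.ne_bot_iff]
  by_cases hz : ∀ j ∈ J, j * r = 0
  · obtain ⟨x, hxJ, hx0⟩ := (Submodule.ne_bot_iff J).mp hJ
    refine ⟨x, ⟨?_, hxJ⟩, hx0⟩
    show x • r ∈ E
    rw [smul_eq_mul, hz x hxJ]
    exact E.zero_mem
  · push_neg at hz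
    obtain ⟨j, hjJ, hjr⟩ := hz
    have hmap : J.map (LinearMap.toSpanSingleton R R r) ≠ ⊥ := by
      rw [Submodule.ne_bot_iff]
      exact ⟨j * r, Submodule.mem_map.mpr ⟨j, hjJ, rfl⟩, hjr⟩
    obtain ⟨y, hy, hy0⟩ := (Submodule.ne_bot_iff _).mp (hE _ hmap)
    obtain ⟨hyE, j', hj'J, hj'y⟩ := hy
    rcases Submodule.mem_map.mp ⟨j', hj'J, hj'y⟩ with _
    refine ⟨j', ⟨?_, hj'J⟩, ?_⟩
    · show j' • r ∈ E
      rw [show j' • r = y from hj'y]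
      exact hyE
    · intro h0
      apply hy0
      rw [← hj'y, h0]
      simp

/-- If a graded left ideal meets every nonzero graded left ideal nontrivially,
then it is essential. -/
lemma ess_of_gr_ess (h𝒜 : IsGRing 𝒜) {N : Submodule R R}
    (hN : IsGradedLeftIdeal 𝒜 N)
    (hgr : ∀ L : Submodule R R, IsGradedLeftIdeal 𝒜 L → L ≠ ⊥ → N ⊓ L ≠ ⊥) :
    IsEssentialLeftIdeal N := by
  classical
  intro P hP
  obtain ⟨x0, hx0P, hx00⟩ := (Submodule.ne_bot_iff P).mp hP
  have hNc := (graded_iff_pi h𝒜).mp hN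
  have key : ∀ n : ℕ, ∀ x : R, x ∈ P → x ≠ 0 →
      ((gsupp h𝒜 x).filter (fun g => gpi h𝒜 g x ∉ N)).card ≤ n → N ⊓ P ≠ ⊥ := by
    intro n
    induction n with
    | zero =>
      intro x hxP hx0 hcard
      rw [Nat.le_zero, Finset.card_eq_zero, Finset.filter_eq_empty_iff] at hcard
      have hxN : x ∈ N := by
        rw [← gsum_pi h𝒜 x]
        refine Submodule.sum_mem _ fun g hg => ?_
        by_contra hbad
        exact (hcard hg) hbad
      rw [Submodule.ne_bot_iff]
      exact ⟨x, ⟨hxN, hxP⟩, hx0⟩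
    | succ n ih =>
      intro x hxP hx0 hcard
      set S := (gsupp h𝒜 x).filter (fun g => gpi h𝒜 g x ∉ N) with hS
      by_cases hle : S.card ≤ n
      · exact ih x hxP hx0 hle
      · have hSne : S.Nonempty := by
          rw [← Finset.card_pos]; omega
        obtain ⟨g1, hg1S⟩ := hSne
        have hg1 : gpi h𝒜 g1 x ∉ N := (Finset.mem_filter.mp hg1S).2
        have hg1ne : gpi h𝒜 g1 x ≠ 0 := fun h => hg1 (h ▸ N.zero_mem)
        -- the graded ideal R·(π g1 x) is nonzero, so meets N
        have hLgr := graded_span_singleton h𝒜 (gpi_mem h𝒜 g1 x)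
        have hLne : Submodule.span R {gpi h𝒜 g1 x} ≠ ⊥ :=
          fun h => hg1ne (Submodule.span_singleton_eq_bot.mp h)
        obtain ⟨y, ⟨hyN, hyL⟩, hy0⟩ := (Submodule.ne_bot_iff _).mp (hgr _ hLgr hLne)
        obtain ⟨t, hty⟩ := Submodule.mem_span_singleton.mp hyL
        obtain ⟨d0, hd0⟩ := gexists_pi_ne h𝒜 hy0
        set d := d0 * g1⁻¹ with hd
        set r := gpi h𝒜 d t with hr
        have hrmem : r ∈ 𝒜 d := gpi_mem h𝒜 d t
        have hrg1 : r * gpi h𝒜 g1 x = gpi h𝒜 d0 y := by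
          rw [← hty]
          show r * gpi h𝒜 g1 x = gpi h𝒜 d0 (t * gpi h𝒜 g1 x)
          rw [gpi_mul_right h𝒜 (gpi_mem h𝒜 g1 x)]
        have hrg1N : r * gpi h𝒜 g1 x ∈ N := hrg1 ▸ hNc y hyN d0
        have hrg1ne : r * gpi h𝒜 g1 x ≠ 0 := hrg1 ▸ hd0
        set z := r * x with hz
        have hzP : z ∈ P := P.smul_mem r hxP
        have hzpi : ∀ k, gpi h𝒜 k z = r * gpi h𝒜 (d⁻¹ * k) x := fun k =>
          gpi_mul_left h𝒜 hrmem k x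
        have hzg1 : gpi h𝒜 (d * g1) z = r * gpi h𝒜 g1 x := by
          rw [hzpi, inv_mul_cancel_left]
        have hz0 : z ≠ 0 := by
          intro h
          apply hrg1ne
          rw [← hzg1, h, gpi_zero]
        -- the bad set of z injects into S.erase g1
        have hsub : ((gsupp h𝒜 z).filter (fun g => gpi h𝒜 g z ∉ N)).image
            (fun k => d⁻¹ * k) ⊆ S.erase g1 := by
          intro w hw
          obtain ⟨k, hk, rfl⟩ := Finset.mem_image.mp hw
          have hkbad : gpi h𝒜 k z ∉ N := (Finset.mem_filter.mp hk).2
          have hxk : gpi h𝒜 (d⁻¹ * k) x ∉ N := by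
            intro hmem
            exact hkbad (hzpi k ▸ N.smul_mem r hmem)
          have hxkne : gpi h𝒜 (d⁻¹ * k) x ≠ 0 := by
            intro h0
            apply hkbad
            rw [hzpi k, h0, mul_zero]
            exact N.zero_mem
          refine Finset.mem_erase.mpr ⟨?_, Finset.mem_filter.mpr ⟨?_, hxk⟩⟩
          · intro h
            apply hkbad
            rw [hzpi k, h]
            exact hrg1N
          · rw [gsupp, DFinsupp.mem_support_iff]
            intro h0
            apply hxkne
            show ((gdecomp h𝒜 x) (d⁻¹ * k) : R) = 0
            rw [h0]; rfl
        have hcard2 : ((gsupp h𝒜 z).filter (fun g => gpi h𝒜 g z ∉ N)).card ≤ n := by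
          have h1 : ((gsupp h𝒜 z).filter (fun g => gpi h𝒜 g z ∉ N)).card =
              (((gsupp h𝒜 z).filter (fun g => gpi h𝒜 g z ∉ N)).image
                (fun k => d⁻¹ * k)).card := by
            rw [Finset.card_image_of_injective _ (mul_right_injective d⁻¹)]
          have h2 := Finset.card_le_card hsub
          have h3 : (S.erase g1).card = S.card - 1 := Finset.card_erase_of_mem hg1S
          omega
        exact ih z hzP hz0 hcard2
  exact fun h => key _ x0 hx0P hx00 le_rfl h


lemma top_of_one_mem {M : Submodule R R} (h : (1 : R) ∈ M) : M = ⊤ :=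
  Submodule.eq_top_iff'.mpr fun r => by simpa using M.smul_mem r h

/-- Key application of the graded Baer criterion: if `x` is homogeneous of degree
`g` and `L` is a graded left ideal with `L ⊓ ann_ℓ(x) = ⊥`, then there is a
homogeneous `u` of degree `g⁻¹` with `l * x * u = l` for all `l ∈ L`. -/
lemma baer_compl (h𝒜 : IsGRing 𝒜) (hinj : GrLeftSelfInjective 𝒜)
    {g : G} {x : R} (hx : x ∈ 𝒜 g) {L : Submodule R R}
    (hL : IsGradedLeftIdeal 𝒜 L) (hdisj : L ⊓ annLIdeal x = ⊥) :
    ∃ u ∈ 𝒜 g⁻¹, ∀ l ∈ L, l * x * u = l := by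
  have hkill : ∀ a : R, a ∈ L → a * x = 0 → a = 0 := by
    intro a haL hax
    have : a ∈ L ⊓ annLIdeal x := ⟨haL, hax⟩
    rw [hdisj] at this
    exact this
  set f0 : L →ₗ[R] R := (LinearMap.toSpanSingleton R R x).comp L.subtype with hf0
  have hf0app : ∀ l : L, f0 l = (l : R) * x := fun l => rfl
  have hinj0 : Function.Injective f0 := by
    intro a b hab
    have h1 : ((a : R) - b) * x = 0 := by
      rw [sub_mul, sub_eq_zero, ← hf0app, ← hf0app, hab]
    have h2 := hkill _ (L.sub_mem a.2 b.2) h1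
    exact Subtype.ext (sub_eq_zero.mp h2)
  set I := LinearMap.range f0 with hI
  have hIgr : IsGradedLeftIdeal 𝒜 I := by
    rw [graded_iff_pi h𝒜]
    rintro y ⟨l, rfl⟩ k
    rw [hf0app, gpi_mul_right h𝒜 hx]
    have hmem : gpi h𝒜 (k * g⁻¹) (l : R) ∈ L :=
      (graded_iff_pi h𝒜).mp hL _ l.2 _
    exact ⟨⟨_, hmem⟩, rfl⟩
  set e := LinearEquiv.ofInjective f0 hinj0 with he
  set f : I →ₗ[R] R := L.subtype ∘ₗ e.symm.toLinearMap with hfdef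
  have hfl : ∀ l : L, ∀ (hy : f0 l ∈ I), f ⟨f0 l, hy⟩ = (l : R) := by
    intro l hy
    have h1 : e l = ⟨f0 l, hy⟩ := Subtype.ext (LinearEquiv.ofInjective_apply f0 l)
    show (e.symm ⟨f0 l, hy⟩ : R) = (l : R)
    rw [← h1, e.symm_apply_apply]
  have hdeg : ∀ (k : G) (y : I), (y : R) ∈ 𝒜 k → f y ∈ 𝒜 (k * g⁻¹) := by
    intro k y hy
    set l : L := e.symm y with hl
    have hly : f0 l = (y : R) := by
      calc f0 l = (e l : R) := (LinearEquiv.ofInjective_apply f0 l).symm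
      _ = (y : R) := congrArg Subtype.val (e.apply_symm_apply y)
    have hfy : f y = (l : R) := rfl
    rw [hfy]
    have hcomp : ∀ t, t ≠ k * g⁻¹ → gpi h𝒜 t (l : R) = 0 := by
      intro t ht
      have h1 : gpi h𝒜 t (l : R) * x = gpi h𝒜 (t * g) ((l : R) * x) := by
        rw [gpi_mul_right h𝒜 hx, mul_inv_cancel_right]
      rw [← hf0app, hly] at h1
      have h2 : gpi h𝒜 (t * g) (y : R) = 0 := by
        apply gpi_of_mem_ne h𝒜 hy
        intro hk
        exact ht (eq_mul_inv_iff_mul_eq.mpr hk)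
      rw [h2] at h1
      exact hkill _ ((graded_iff_pi h𝒜).mp hL _ l.2 t) h1
    have : (l : R) = ∑ t ∈ gsupp h𝒜 (l : R), gpi h𝒜 t (l : R) :=
      (gsum_pi h𝒜 _).symm
    rw [this]
    refine AddSubgroup.sum_mem _ fun t _ => ?_
    by_cases htk : t = k * g⁻¹
    · subst htk; exact gpi_mem h𝒜 _ _
    · rw [hcomp t htk]; exact AddSubgroup.zero_mem _
  obtain ⟨m, hm, hfm⟩ := hinj I hIgr g⁻¹ f hdeg
  refine ⟨m, hm, fun l hl => ?_⟩
  have h1 := hfm ⟨f0 ⟨l, hl⟩, LinearMap.mem_range_self f0 ⟨l, hl⟩⟩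
  rw [hfl ⟨l, hl⟩] at h1
  calc l * x * m = f0 ⟨l, hl⟩ * m := by rw [hf0app]
  _ = l := h1.symm

/-- If `y` is homogeneous of degree `1` with essential left annihilator, then
`1 - y` has a homogeneous right inverse. -/
lemma right_inv_of_sing (h𝒜 : IsGRing 𝒜) (hinj : GrLeftSelfInjective 𝒜)
    {y : R} (hy : y ∈ 𝒜 1) (hess : IsEssentialLeftIdeal (annLIdeal y)) :
    ∃ u ∈ 𝒜 1, (1 - y) * u = 1 := by
  have hann : annLIdeal (1 - y) = ⊥ := by
    by_contra h
    obtain ⟨a, ha, ha0⟩ := (Submodule.ne_bot_iff _).mp (hess _ h)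
    obtain ⟨ha1, ha2⟩ := Submodule.mem_inf.mp ha
    rw [mem_annLIdeal] at ha1 ha2
    apply ha0
    have : a = a * (1 - y) + a * y := by noncomm_ring
    rw [this, ha1, ha2, add_zero]
  have h1y : (1 : R) - y ∈ 𝒜 1 := AddSubgroup.sub_mem _ h𝒜.1 hy
  have hdisj : (⊤ : Submodule R R) ⊓ annLIdeal (1 - y) = ⊥ := by
    rw [top_inf_eq, hann]
  obtain ⟨u, hu, hlu⟩ := baer_compl h𝒜 hinj h1y (graded_top h𝒜) hdisj
  rw [inv_one] at hu
  have h1 := hlu 1 trivial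
  rw [one_mul] at h1
  exact ⟨u, hu, h1⟩

/-- Upgrade: `1 - y` also has a left inverse. -/
lemma left_inv_of_sing (h𝒜 : IsGRing 𝒜) (hinj : GrLeftSelfInjective 𝒜)
    {y : R} (hy : y ∈ 𝒜 1) (hess : IsEssentialLeftIdeal (annLIdeal y)) :
    ∃ u : R, u * (1 - y) = 1 := by
  obtain ⟨u, hu1, hu2⟩ := right_inv_of_sing h𝒜 hinj hy hess
  have hu3 : u = 1 + y * u := by
    have h : (1 - y) * u = u - y * u := by noncomm_ring
    rw [h] at hu2
    exact sub_eq_iff_eq_add.mp hu2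
  have hy'mem : -(y * u) ∈ 𝒜 1 := by
    have h : y * u ∈ 𝒜 (1 * 1) := h𝒜.2.1 _ _ _ _ hy hu1
    rw [one_mul] at h
    exact AddSubgroup.neg_mem _ h
  have hy'ess : IsEssentialLeftIdeal (annLIdeal (-(y * u))) := by
    refine ess_mono (fun a ha => ?_) hess
    rw [mem_annLIdeal] at ha ⊢
    have : a * -(y * u) = -((a * y) * u) := by noncomm_ring
    rw [this, ha, zero_mul, neg_zero]
  obtain ⟨v, _, hv2⟩ := right_inv_of_sing h𝒜 hinj hy'mem hy'ess
  have hveq : (1 : R) - -(y * u) = u := by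
    rw [sub_neg_eq_add]
    exact hu3.symm
  rw [hveq] at hv2
  have hv : (1 : R) - y = v := by
    calc (1 : R) - y = (1 - y) * (u * v) := by rw [hv2, mul_one]
    _ = ((1 - y) * u) * v := by rw [mul_assoc]
    _ = v := by rw [hu2, one_mul]
  exact ⟨u, by rw [hv, hv2]⟩


/-- Every homogeneous element of the graded singular ideal lies in every maximal
graded left ideal. -/
lemma sing_mem_max (h𝒜 : IsGRing 𝒜) (hinj : GrLeftSelfInjective 𝒜)
    {g : G} {z : R} (hz : z ∈ grSingSet 𝒜 g)
    {M : Submodule R R} (hM : IsMaxGradedLeftIdeal 𝒜 M) : z ∈ M := by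
  obtain ⟨hzg, hzess⟩ := hz
  by_contra hzM
  have hTgr := graded_sup h𝒜 hM.1 (graded_span_singleton h𝒜 hzg)
  have hlt : M < M ⊔ Submodule.span R {z} := by
    refine lt_of_le_of_ne le_sup_left fun h => hzM ?_
    rw [h]
    exact Submodule.mem_sup_right (Submodule.mem_span_singleton_self z)
  have hTtop := hM.2.2 _ hTgr hlt
  have h1 : (1 : R) ∈ M ⊔ Submodule.span R {z} := by rw [hTtop]; trivial
  obtain ⟨m, hm, t, ht, hmt⟩ := Submodule.mem_sup.mp h1
  obtain ⟨r, hrz⟩ := Submodule.mem_span_singleton.mp ht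
  have hproj : (1 : R) = gpi h𝒜 1 m + gpi h𝒜 g⁻¹ r * z := by
    have h2 := congrArg (gpi h𝒜 1) hmt
    rw [gpi_add, gpi_one] at h2
    rw [← h2]
    congr 1
    rw [← hrz]
    show gpi h𝒜 1 ((r : R) * z) = gpi h𝒜 g⁻¹ r * z
    rw [gpi_mul_right h𝒜 hzg, one_mul]
  set z' := gpi h𝒜 g⁻¹ r * z with hz'
  have hz'mem : z' ∈ 𝒜 1 := by
    have h3 := h𝒜.2.1 _ _ _ _ (gpi_mem h𝒜 g⁻¹ r) hzg
    rwa [inv_mul_cancel] at h3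
  have hz'ess : IsEssentialLeftIdeal (annLIdeal z') := by
    refine ess_mono (fun a ha => ?_) (ess_comap hzess (gpi h𝒜 g⁻¹ r))
    rw [mem_annLIdeal]
    have ha' : (a * gpi h𝒜 g⁻¹ r) * z = 0 := ha
    rw [hz', ← mul_assoc]
    exact ha'
  have hm1 : (1 : R) - z' ∈ M := by
    have h4 : (1 : R) - z' = gpi h𝒜 1 m := by rw [hproj]; abel
    rw [h4]
    exact (graded_iff_pi h𝒜).mp hM.1 m hm 1
  obtain ⟨u, hu⟩ := left_inv_of_sing h𝒜 hinj hz'mem hz'ess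
  have h1M : (1 : R) ∈ M := by
    have := M.smul_mem u hm1
    rwa [smul_eq_mul, hu] at this
  exact hM.2.1 (top_of_one_mem h1M)

/-- Homogeneous elements of the graded Jacobson radical are left quasi-regular,
with homogeneous witness. -/
lemma jac_left_inv (h𝒜 : IsGRing 𝒜) {g : G} {x : R}
    (hx : x ∈ grJacobson 𝒜) (hxg : x ∈ 𝒜 g) {r : R} (hr : r ∈ 𝒜 g⁻¹) :
    ∃ w ∈ 𝒜 1, w * (1 - r * x) = 1 := by
  have hrx : r * x ∈ 𝒜 1 := by
    have h := h𝒜.2.1 _ _ _ _ hr hxg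
    rwa [inv_mul_cancel] at h
  have h1rx : (1 : R) - r * x ∈ 𝒜 1 := AddSubgroup.sub_mem _ h𝒜.1 hrx
  have hexists : ∃ s : R, s * (1 - r * x) = 1 := by
    by_contra hno
    push_neg at hno
    have hproper : Submodule.span R {(1 : R) - r * x} ≠ ⊤ := by
      intro h
      have h1 : (1 : R) ∈ Submodule.span R {(1 : R) - r * x} := by rw [h]; trivial
      obtain ⟨s, hs⟩ := Submodule.mem_span_singleton.mp h1
      exact hno s hs
    obtain ⟨M, hM, hIM⟩ := exists_max_graded h𝒜 (graded_span_singleton h𝒜 h1rx) hproper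
    have hxM : x ∈ M := Submodule.mem_sInf.mp hx M hM
    have h1M : (1 : R) ∈ M := by
      have h2 : (1 : R) - r * x ∈ M := hIM (Submodule.mem_span_singleton_self _)
      have h3 : r * x ∈ M := by
        have := M.smul_mem r hxM
        rwa [smul_eq_mul] at this
      have h4 := M.add_mem h2 h3
      rwa [sub_add_cancel] at h4
    exact hM.2.1 (top_of_one_mem h1M)
  obtain ⟨s, hs⟩ := hexists
  refine ⟨gpi h𝒜 1 s, gpi_mem h𝒜 1 s, ?_⟩
  have h5 := congrArg (gpi h𝒜 1) hs
  rw [gpi_one, gpi_mul_right h𝒜 h1rx, inv_one, mul_one] at h5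
  exact h5

lemma jac_both_inv (h𝒜 : IsGRing 𝒜) {g : G} {x : R}
    (hx : x ∈ grJacobson 𝒜) (hxg : x ∈ 𝒜 g) {r : R} (hr : r ∈ 𝒜 g⁻¹) :
    ∃ w : R, w * (1 - r * x) = 1 ∧ (1 - r * x) * w = 1 := by
  obtain ⟨w, hwmem, hwleft⟩ := jac_left_inv h𝒜 hx hxg hr
  have hw3 : w = 1 + w * (r * x) := by
    have h : w * (1 - r * x) = w - w * (r * x) := by noncomm_ring
    rw [h] at hwleft
    exact sub_eq_iff_eq_add.mp hwleft
  have hr2 : -(w * r) ∈ 𝒜 g⁻¹ := by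
    have h := h𝒜.2.1 _ _ _ _ hwmem hr
    rw [one_mul] at h
    exact AddSubgroup.neg_mem _ h
  obtain ⟨v, _, hv2⟩ := jac_left_inv h𝒜 hx hxg hr2
  have hveq : (1 : R) - -(w * r) * x = w := by
    rw [neg_mul, sub_neg_eq_add, mul_assoc]
    exact hw3.symm
  rw [hveq] at hv2
  have hfin : (1 : R) - r * x = v := by
    calc (1 : R) - r * x = (v * w) * (1 - r * x) := by rw [hv2, one_mul]
    _ = v * (w * (1 - r * x)) := by rw [mul_assoc]
    _ = v := by rw [hwleft, mul_one]
  exact ⟨w, hwleft, by rw [hfin, hv2]⟩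

lemma jac_unit (h𝒜 : IsGRing 𝒜) {g : G} {x : R}
    (hx : x ∈ grJacobson 𝒜) (hxg : x ∈ 𝒜 g) {u : R} (hu : u ∈ 𝒜 g⁻¹) :
    ∃ v : R, (1 - x * u) * v = 1 := by
  obtain ⟨w, _, hwr⟩ := jac_both_inv h𝒜 hx hxg hu
  refine ⟨1 + x * w * u, ?_⟩
  have h : w - u * x * w = 1 := by
    have h2 : (1 - u * x) * w = w - u * x * w := by noncomm_ring
    rw [h2] at hwr
    exact hwr
  have key : (1 - x * u) * (1 + x * w * u) = 1 + x * ((w - u * x * w) - 1) * u := by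
    noncomm_ring
  rw [key, h, sub_self, mul_zero, zero_mul, add_zero]

/-- Homogeneous elements of the graded Jacobson radical have essential left
annihilator when `R` is graded left self-injective. -/
lemma jac_homog_ess (h𝒜 : IsGRing 𝒜) (hinj : GrLeftSelfInjective 𝒜)
    {g : G} {x : R} (hx : x ∈ grJacobson 𝒜) (hxg : x ∈ 𝒜 g) :
    IsEssentialLeftIdeal (annLIdeal x) := by
  apply ess_of_gr_ess h𝒜 (graded_annL h𝒜 hxg)
  intro L hLgr hLne
  intro hbot
  have hdisj : L ⊓ annLIdeal x = ⊥ := by rw [inf_comm]; exact hbot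
  obtain ⟨u, hu, hlu⟩ := baer_compl h𝒜 hinj hxg hLgr hdisj
  obtain ⟨v, hv⟩ := jac_unit h𝒜 hx hxg hu
  obtain ⟨l, hlL, hl0⟩ := (Submodule.ne_bot_iff L).mp hLne
  apply hl0
  have h1 : l * (1 - x * u) = 0 := by
    have h2 := hlu l hlL
    have h3 : l * (1 - x * u) = l - l * x * u := by noncomm_ring
    rw [h3, h2, sub_self]
  calc l = l * ((1 - x * u) * v) := by rw [hv, mul_one]
  _ = (l * (1 - x * u)) * v := by rw [mul_assoc]
  _ = 0 := by rw [h1, zero_mul]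

end Aux


/-- if `R` is graded left self-injective then the graded singular
ideal equals the graded Jacobson radical, and `R/J^gr(R)` is graded von Neumann
regular (every homogeneous `a` satisfies `a = aba` modulo `J^gr(R)`). -/
theorem graded_singular_eq_graded_jacobson_of_graded_self_injective
    (𝒜 : G → AddSubgroup R) (h𝒜 : IsGRing 𝒜) (hinj : GrLeftSelfInjective 𝒜) :
    (grSing 𝒜 : Set R) = (grJacobson 𝒜 : Set R) ∧
    ∀ (g : G) (a : R), a ∈ 𝒜 g → ∃ b : R, a - a * b * a ∈ grJacobson 𝒜 := by
  have hset : (grSing 𝒜 : Set R) = (grJacobson 𝒜 : Set R) := by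
    apply Set.Subset.antisymm
    · intro x hx
      have hle : grSing 𝒜 ≤ (grJacobson 𝒜).toAddSubgroup := by
        apply AddSubgroup.closure_le _ |>.mpr
        rintro y hy
        obtain ⟨S, ⟨g, rfl⟩, hyg⟩ := hy
        show y ∈ grJacobson 𝒜
        exact Submodule.mem_sInf.mpr fun M hM => sing_mem_max h𝒜 hinj hyg hM
      exact hle hx
    · intro x hx
      show x ∈ grSing 𝒜
      have hx' : x ∈ grJacobson 𝒜 := hx
      rw [← gsum_pi h𝒜 x]
      refine AddSubgroup.sum_mem _ fun g _ => ?_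
      apply AddSubgroup.subset_closure
      refine Set.mem_iUnion.mpr ⟨g, ?_⟩
      exact ⟨gpi_mem h𝒜 g x,
        jac_homog_ess h𝒜 hinj (grJacobson_pi h𝒜 hx' g) (gpi_mem h𝒜 g x)⟩
  refine ⟨hset, ?_⟩
  intro g a ha
  obtain ⟨K, -, hKmem, hKmax⟩ :=
    zorn_le_nonempty₀ {K : Submodule R R | IsGradedLeftIdeal 𝒜 K ∧ K ⊓ annLIdeal a = ⊥}
      (fun c hc hchain y hy => by
        refine ⟨sSup c, ⟨?_, ?_⟩, fun z hz => le_sSup hz⟩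
        · rw [graded_iff_pi h𝒜]
          intro x hx gg
          obtain ⟨J, hJc, hxJ⟩ := (Submodule.mem_sSup_of_directed ⟨y, hy⟩
            hchain.directedOn).mp hx
          exact le_sSup hJc ((graded_iff_pi h𝒜).mp (hc hJc).1 x hxJ gg)
        · rw [eq_bot_iff]
          intro x hx
          obtain ⟨hx1, hx2⟩ := Submodule.mem_inf.mp hx
          obtain ⟨J, hJc, hxJ⟩ := (Submodule.mem_sSup_of_directed ⟨y, hy⟩
            hchain.directedOn).mp hx1
          have hmem : x ∈ J ⊓ annLIdeal a := ⟨hxJ, hx2⟩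
          rw [(hc hJc).2] at hmem
          exact hmem)
      ⊥ ⟨graded_bot h𝒜, by simp⟩
  obtain ⟨hKgr, hKdisj⟩ := hKmem
  have hess : IsEssentialLeftIdeal (annLIdeal a ⊔ K) := by
    apply ess_of_gr_ess h𝒜 (graded_sup h𝒜 (graded_annL h𝒜 ha) hKgr)
    intro L hLgr hLne hsup
    have hKL : (K ⊔ L) ⊓ annLIdeal a = ⊥ := by
      rw [eq_bot_iff]
      intro x hx
      obtain ⟨hx1, hx2⟩ := Submodule.mem_inf.mp hx
      obtain ⟨k, hk, l, hl, rfl⟩ := Submodule.mem_sup.mp hx1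
      have hlmem : l ∈ (annLIdeal a ⊔ K) ⊓ L := by
        refine Submodule.mem_inf.mpr ⟨?_, hl⟩
        have : l = (k + l) - k := by abel
        rw [this]
        exact Submodule.sub_mem _ (Submodule.mem_sup_left hx2)
          (Submodule.mem_sup_right hk)
      rw [hsup] at hlmem
      have hl0 : l = 0 := hlmem
      subst hl0
      have hkmem : k ∈ K ⊓ annLIdeal a := ⟨hk, by rwa [add_zero] at hx2⟩
      rw [hKdisj] at hkmem
      have hk0 : k = 0 := hkmem
      simp [hk0]
    have hKKL : K ⊔ L ≤ K := hKmax ⟨graded_sup h𝒜 hKgr hLgr, hKL⟩ le_sup_left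
    have hLK : L ≤ K := le_trans le_sup_right hKKL
    apply hLne
    rw [eq_bot_iff]
    intro x hx
    have hmem : x ∈ (annLIdeal a ⊔ K) ⊓ L :=
      Submodule.mem_inf.mpr ⟨Submodule.mem_sup_right (hLK hx), hx⟩
    rw [hsup] at hmem
    exact hmem
  obtain ⟨u, hu, hku⟩ := baer_compl h𝒜 hinj ha hKgr hKdisj
  refine ⟨u, ?_⟩
  have hmem : a - a * u * a ∈ grSingSet 𝒜 g := by
    constructor
    · apply AddSubgroup.sub_mem _ ha
      have h1 : a * u ∈ 𝒜 (g * g⁻¹) := h𝒜.2.1 _ _ _ _ ha hu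
      rw [mul_inv_cancel] at h1
      have h2 : a * u * a ∈ 𝒜 (1 * g) := h𝒜.2.1 _ _ _ _ h1 ha
      rwa [one_mul] at h2
    · refine ess_mono ?_ hess
      apply sup_le
      · intro t ht
        rw [mem_annLIdeal] at ht ⊢
        have h3 : t * (a - a * u * a) = t * a - ((t * a) * u) * a := by noncomm_ring
        rw [h3, ht, zero_mul, zero_mul, sub_zero]
      · intro k hk
        rw [mem_annLIdeal]
        have hka := hku k hk
        have h4 : k * (a - a * u * a) = k * a - (k * a * u) * a := by noncomm_ring
        rw [h4, hka, sub_self]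
  have hsing : a - a * u * a ∈ grSing 𝒜 :=
    AddSubgroup.subset_closure (Set.mem_iUnion.mpr ⟨g, hmem⟩)
  have hfin : a - a * u * a ∈ (grJacobson 𝒜 : Set R) := hset ▸ hsing
  exact hfin
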